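/- For any real x > 0 and step size 0 < Δt ≤ 1, the function h(x) = x·e^{Δt(1-x)} satisfies |h(x) - 1| ≤ |x - 1|, with equality if and only if x = 1. -/
import Mathlib


/-- For `0 < Δt ≤ 1` and `x > 0`, the map `h(x) = x·e^{Δt(1-x)}` satisfies
`|h(x) - 1| ≤ |x - 1|`, with equality iff `x = 1`. -/
theorem stmt_0 (Δt x : ℝ) (hΔt0 : 0 < Δt) (hΔt1 : Δt ≤ 1) (hx : 0 < x) :
    |x * Real.exp (Δt * (1 - x)) - 1| ≤ |x - 1| ∧
    (|x * Real.exp (Δt * (1 - x)) - 1| = |x - 1| ↔ x = 1) := by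
  rcases eq_or_ne x 1 with h1 | h1
  · subst h1; simp
  · have key : |x * Real.exp (Δt * (1 - x)) - 1| < |x - 1| := by
      set t := Δt * (1 - x) with ht
      have hexp := Real.exp_pos t
      rcases lt_or_gt_of_ne h1 with hlt | hgt
      · -- x < 1, so t > 0
        have ht0 : 0 < t := mul_pos hΔt0 (by linarith)
        have he := Real.add_one_lt_exp (ne_of_gt ht0)
        have hneg : 1 - t < Real.exp (-t) := by
          have := Real.add_one_lt_exp (show (-t) ≠ 0 by simpa using ne_of_gt ht0)
          linarith
        have hub : x * Real.exp t < 1 := by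
          have hx' : x < Real.exp (-t) := by nlinarith
          have := mul_lt_mul_of_pos_right hx' hexp
          rwa [← Real.exp_add, neg_add_cancel, Real.exp_zero] at this
        have hlb : x < x * Real.exp t := by
          nlinarith [mul_pos hx (show (0:ℝ) < Real.exp t - 1 by linarith)]
        rw [abs_of_neg (by linarith : x * Real.exp t - 1 < 0),
            abs_of_neg (by linarith : x - 1 < 0)]
        linarith
      · -- x > 1, so t < 0
        have ht0 : t < 0 := mul_neg_of_pos_of_neg hΔt0 (by linarith)
        have he := Real.add_one_lt_exp (ne_of_lt ht0)
        have h1' : Real.exp t < 1 := by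
          rw [← Real.exp_zero]; exact Real.exp_lt_exp.mpr ht0
        have hub : x * Real.exp t < x := by nlinarith
        have hlb : 2 - x < x * Real.exp t := by
          nlinarith [mul_pos hx hexp]
        rw [abs_of_pos (by linarith : (0:ℝ) < x - 1), abs_lt]
        constructor <;> linarith
    exact ⟨key.le, ⟨fun heq => absurd heq key.ne, fun hx1 => absurd hx1 h1⟩⟩
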